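/- Sufficiency of O(m^{3/2}) shortcuts: there exist a constant C > 0 and an integer m₀ such that for every integer m ≥ m₀ there is a finite set S of shortcuts with |S| ≤ C·m^{3/2} and diam(S) ≤ 2 + 1/m. -/

import Mathlib

open Real MeasureTheory

/-- Arc distance between points on the unit circle, given by their polar angles:
the length of the shorter arc between them. -/
noncomputable def arcDist (p q : ℝ) : ℝ := ⨅ n : ℤ, |p - q + 2 * π * n|

/-- Euclidean length of the chord between the circle points with angles `u` and `v`. -/
noncomputable def chordLen (u v : ℝ) : ℝ := 2 * Real.sin (arcDist u v / 2)

/-- A pair of angles is a genuine shortcut (chord) if its endpoints are distinct points. -/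
def IsShortcut (s : ℝ × ℝ) : Prop := arcDist s.1 s.2 ≠ 0

/-- δ(a) = arcsin(a/2) - a/2. -/
noncomputable def sdelta (a : ℝ) : ℝ := Real.arcsin (a / 2) - a / 2

/-- Cost of a path that starts at `p`, fully traverses the listed chords in order
(travelling along the circle in between), and ends at `q`. -/
noncomputable def walkCost (q : ℝ) : ℝ → List (ℝ × ℝ) → ℝ
  | p, [] => arcDist p q
  | p, e :: L => arcDist p e.1 + chordLen e.1 e.2 + walkCost q e.2 L

/-- Shortest-path distance from `p` to `q` using the shortcuts of `S`
(each usable in either orientation, and always traversed completely). -/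
noncomputable def dS (S : Finset (ℝ × ℝ)) (p q : ℝ) : ℝ :=
  sInf {c | ∃ L : List (ℝ × ℝ), (∀ e ∈ L, e ∈ S ∨ (e.2, e.1) ∈ S) ∧ c = walkCost q p L}

/-- Diameter of the circle augmented with the shortcuts of `S`. -/
noncomputable def diamS (S : Finset (ℝ × ℝ)) : ℝ :=
  sSup {d | ∃ p q : ℝ, d = dS S p q}

/-- diam(k): the optimal diameter achievable with `k` shortcuts. -/
noncomputable def diamK (k : ℕ) : ℝ :=
  sInf {d | ∃ S : Finset (ℝ × ℝ), S.card = k ∧ (∀ s ∈ S, IsShortcut s) ∧ d = diamS S}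

/-- Distance from `p` to `q` when a single shortcut with endpoints `u`, `v` is available. -/
noncomputable def dOne (u v p q : ℝ) : ℝ :=
  min (arcDist p q)
    (min (arcDist p u + chordLen u v + arcDist v q)
      (arcDist p v + chordLen u v + arcDist u q))

/-- Two angles represent the same point of the circle. -/
def SamePoint (p q : ℝ) : Prop := arcDist p q = 0

/-- Two pairs of angles represent the same chord of the circle. -/
def SameChord (s t : ℝ × ℝ) : Prop :=
  (SamePoint s.1 t.1 ∧ SamePoint s.2 t.2) ∨ (SamePoint s.1 t.2 ∧ SamePoint s.2 t.1)

/-- `p` lies in the deep umbra of the shortcut from `u` to `u + β`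
(where `0 < β ≤ π` is the counterclockwise arc spanned by the shortcut):
`p` lies in the inner umbra, and `|p u'| + |s| ≥ d(p, v')` where `u'` is the
endpoint closer to `p` and `v'` the other one. -/
def InDeepUmbra (u β p : ℝ) : Prop :=
  (∃ t : ℝ, sdelta (chordLen u (u + β)) ≤ t ∧ t ≤ β - sdelta (chordLen u (u + β)) ∧
    arcDist p (u + t) = 0) ∧
  (arcDist p u ≤ arcDist p (u + β) →
    arcDist p (u + β) ≤ chordLen p u + chordLen u (u + β)) ∧
  (arcDist p (u + β) ≤ arcDist p u →
    arcDist p u ≤ chordLen p (u + β) + chordLen u (u + β))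

/-- `d` equals δ*_k : for `k ∈ {3,4,5}` this is `δ(a*_k)` where `a*_k + δ(a*_k) = (k-1)π/k`,
and for `k = 6` it is `δ(2) = π/2 - 1`. -/
def dstarSpec (k : ℕ) (d : ℝ) : Prop :=
  (k = 6 ∧ d = sdelta 2) ∨
    (∃ a, a ∈ Set.Icc (0 : ℝ) 2 ∧ a + sdelta a = ((k : ℝ) - 1) * π / k ∧ d = sdelta a)

lemma arcDist_bdd (p q : ℝ) : BddBelow (Set.range fun n : ℤ => |p - q + 2 * π * n|) :=
  ⟨0, by rintro x ⟨n, rfl⟩; positivity⟩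

lemma arcDist_nonneg (p q : ℝ) : 0 ≤ arcDist p q :=
  le_ciInf fun n => abs_nonneg _

lemma arcDist_le (p q : ℝ) (n : ℤ) : arcDist p q ≤ |p - q + 2 * π * n| :=
  ciInf_le (arcDist_bdd p q) n

lemma arcDist_le_abs (p q : ℝ) : arcDist p q ≤ |p - q| := by
  simpa using arcDist_le p q 0

lemma arcDist_comm (p q : ℝ) : arcDist p q = arcDist q p := by
  have h : ∀ a b : ℝ, arcDist a b ≤ arcDist b a := by
    intro a b
    refine le_ciInf fun n => ?_
    calc arcDist a b ≤ |a - b + 2 * π * ((-n : ℤ) : ℝ)| := arcDist_le a b (-n)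
    _ = |b - a + 2 * π * n| := by push_cast; rw [← abs_neg]; ring_nf
  exact le_antisymm (h p q) (h q p)

lemma arcDist_shift (p q : ℝ) (k : ℤ) : arcDist p (q + 2 * π * k) = arcDist p q := by
  have h : ∀ (a b : ℝ) (j : ℤ), arcDist a (b + 2 * π * j) ≤ arcDist a b := by
    intro a b j
    refine le_ciInf fun n => ?_
    calc arcDist a (b + 2 * π * j) ≤ |a - (b + 2 * π * j) + 2 * π * ((n + j : ℤ) : ℝ)| :=
        arcDist_le _ _ _
    _ = |a - b + 2 * π * n| := by push_cast; ring_nf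
  refine le_antisymm (h p q k) ?_
  have := h p (q + 2 * π * k) (-k)
  simpa using this

lemma arcDist_shift' (p q : ℝ) (k : ℤ) : arcDist (p + 2 * π * k) q = arcDist p q := by
  rw [arcDist_comm, arcDist_shift, arcDist_comm]

lemma arcDist_eq_abs {p q : ℝ} (h : |p - q| ≤ π) : arcDist p q = |p - q| := by
  refine le_antisymm (arcDist_le_abs p q) (le_ciInf fun n => ?_)
  have hπ : 0 < π := pi_pos
  rcases lt_trichotomy n 0 with hn | hn | hn
  · have hn1 : (n : ℝ) ≤ -1 := by exact_mod_cast (by omega : n ≤ -1)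
    have h2 : p - q + 2 * π * n ≤ -π := by nlinarith [abs_le.mp h]
    calc |p - q| ≤ π := h
    _ ≤ |p - q + 2 * π * n| := by
        rw [abs_le] at h
        nlinarith [neg_abs_le (p - q + 2*π*n)]
  · simp [hn]
  · have hn1 : (1 : ℝ) ≤ n := by exact_mod_cast hn
    calc |p - q| ≤ π := h
    _ ≤ |p - q + 2 * π * n| := by nlinarith [abs_le.mp h, le_abs_self (p - q + 2*π*n)]

lemma arcDist_le_pi (p q : ℝ) : arcDist p q ≤ π := by
  have h := arcDist_le p q (-round ((p - q) / (2 * π)))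
  have hπ : 0 < π := pi_pos
  have hr := abs_sub_round ((p - q) / (2 * π))
  have he : p - q + 2 * π * (-round ((p - q) / (2 * π)) : ℤ)
      = 2 * π * ((p - q) / (2 * π) - round ((p - q) / (2 * π))) := by
    have h2 : 2 * π * ((p - q) / (2 * π)) = p - q := by field_simp
    push_cast
    linear_combination -h2
  rw [he, abs_mul, abs_of_pos (by linarith : (0:ℝ) < 2 * π)] at h
  nlinarith [abs_nonneg ((p - q) / (2 * π) - round ((p - q) / (2 * π)))]

lemma arcDist_rep (p q : ℝ) : ∃ k : ℤ, q + 2 * π * k = p - (p - q - 2 * π * round ((p-q)/(2*π)))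
    ∧ arcDist p q = |p - q - 2 * π * round ((p-q)/(2*π))| ∧ |p - q - 2 * π * round ((p-q)/(2*π))| ≤ π := by
  set R : ℤ := round ((p-q)/(2*π)) with hR
  have hπ : 0 < π := pi_pos
  have hr := abs_sub_round ((p - q) / (2 * π))
  have he : p - q - 2 * π * R = 2 * π * ((p - q) / (2 * π) - R) := by field_simp
  have hle : |p - q - 2 * π * R| ≤ π := by
    rw [he, abs_mul, abs_of_pos (by linarith : (0:ℝ) < 2 * π)]
    nlinarith [abs_nonneg ((p - q) / (2 * π) - (R:ℝ))]
  refine ⟨R, by ring, ?_, hle⟩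
  have := arcDist_shift p q R
  rw [← this, arcDist_eq_abs (by simpa [sub_sub] using hle : |p - (q + 2*π*R)| ≤ π)]
  ring_nf


lemma chordLen_nonneg (u v : ℝ) : 0 ≤ chordLen u v := by
  have h1 := arcDist_nonneg u v
  have h2 := arcDist_le_pi u v
  have := Real.sin_nonneg_of_nonneg_of_le_pi (by linarith : 0 ≤ arcDist u v / 2)
    (by linarith [pi_pos] : arcDist u v / 2 ≤ π)
  unfold chordLen; linarith

lemma chordLen_comm (u v : ℝ) : chordLen u v = chordLen v u := by
  unfold chordLen; rw [arcDist_comm]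

lemma walkCost_nonneg (q : ℝ) : ∀ (p : ℝ) (L : List (ℝ × ℝ)), 0 ≤ walkCost q p L := by
  intro p L
  induction L generalizing p with
  | nil => exact arcDist_nonneg p q
  | cons e L ih =>
    have := arcDist_nonneg p e.1
    have := chordLen_nonneg e.1 e.2
    have := ih e.2
    simp only [walkCost]; linarith

lemma dS_le (S : Finset (ℝ × ℝ)) (p q : ℝ) (L : List (ℝ × ℝ))
    (hL : ∀ e ∈ L, e ∈ S ∨ (e.2, e.1) ∈ S) : dS S p q ≤ walkCost q p L := by
  apply csInf_le
  · exact ⟨0, by rintro c ⟨L', _, rfl⟩; exact walkCost_nonneg q p L'⟩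
  · exact ⟨L, hL, rfl⟩

lemma cos_le_quad {y : ℝ} (h0 : 0 ≤ y) (h1 : y ≤ 1) : Real.cos y ≤ 1 - y ^ 2 / 4 := by
  have hb := Real.cos_bound (by rwa [abs_of_nonneg h0] : |y| ≤ 1)
  rw [abs_of_nonneg h0] at hb
  have h := (abs_le.mp hb).2
  have h2 : y ^ 2 ≤ 1 := by nlinarith
  have h4 : y ^ 4 ≤ y ^ 2 := by nlinarith [sq_nonneg y]
  nlinarith

noncomputable def gsp (m j : ℕ) : ℝ := (m:ℝ)⁻¹/4 + (j:ℝ)^2*((m:ℝ)⁻¹)^2/128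

noncomputable def bigJ (m : ℕ) : ℕ := ⌈(π-2)/((m:ℝ)⁻¹/2)⌉₊

noncomputable def npts (m j : ℕ) : ℕ := ⌈2*π/(gsp m j)⌉₊

noncomputable def chord (m j i : ℕ) : ℝ × ℝ :=
  ((i:ℝ)*gsp m j, (i:ℝ)*gsp m j + (π - (j:ℝ)*((m:ℝ)⁻¹/2)))

noncomputable def shortcuts (m : ℕ) : Finset (ℝ × ℝ) :=
  ((Finset.range (bigJ m+1)).sigma fun j => Finset.range (npts m j + 1)).image
    (fun ji => chord m ji.1 ji.2)

lemma gsp_pos {m : ℕ} (hm : 10 ≤ m) (j : ℕ) : 0 < gsp m j := by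
  have : (0:ℝ) < (m:ℝ)⁻¹ := by
    have : (0:ℝ) < m := by exact_mod_cast Nat.lt_of_lt_of_le (by norm_num) hm
    positivity
  unfold gsp; positivity

lemma beta_bound {m : ℕ} (hm : 10 ≤ m) {j : ℕ} (hj : j ≤ bigJ m) :
    (j:ℝ)*((m:ℝ)⁻¹/2) ≤ π - 2 + (m:ℝ)⁻¹/2 := by
  have hm' : (0:ℝ) < m := by exact_mod_cast Nat.lt_of_lt_of_le (by norm_num) hm
  have hε : (0:ℝ) < (m:ℝ)⁻¹/2 := by positivity
  have hc : (0:ℝ) ≤ (π-2)/((m:ℝ)⁻¹/2) := by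
    have := pi_gt_three
    apply div_nonneg <;> [linarith; positivity]
  have h1 : (j : ℝ) ≤ (bigJ m : ℝ) := by exact_mod_cast hj
  have h2 : (bigJ m : ℝ) < (π-2)/((m:ℝ)⁻¹/2) + 1 := Nat.ceil_lt_add_one hc
  have h3 : (π-2)/((m:ℝ)⁻¹/2) * ((m:ℝ)⁻¹/2) = π - 2 := by
    field_simp
  nlinarith

/-- Main coverage lemma: a path using one shortcut realizes cost ≤ 2 + 1/m. -/
lemma coverage {m : ℕ} (hm : 10 ≤ m) (p a : ℝ) (ha1 : 2 + (m:ℝ)⁻¹ < a) (ha2 : a ≤ π) :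
    ∃ j ≤ bigJ m, ∃ i ≤ npts m j,
      arcDist p (chord m j i).1 + chordLen (chord m j i).1 (chord m j i).2 +
        arcDist (chord m j i).2 (p + a) ≤ 2 + (m:ℝ)⁻¹ := by
  have hm' : (0:ℝ) < m := by exact_mod_cast Nat.lt_of_lt_of_le (by norm_num) hm
  set ε : ℝ := (m:ℝ)⁻¹ with hεdef
  have hε0 : 0 < ε := by positivity
  have hε10 : ε ≤ 1/10 := by
    rw [hεdef]
    rw [inv_le_comm₀ (by positivity) (by norm_num)]
    norm_num
    exact_mod_cast hm
  have hπ4 : π < 3.15 := pi_lt_d2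
  have hπ3 : 3 < π := pi_gt_three
  have hh : (0:ℝ) < ε/2 := by positivity
  set xa : ℝ := π - a with hxadef
  have hxa0 : 0 ≤ xa := by simp [hxadef]; linarith
  have hxa2 : xa ≤ π - 2 := by simp [hxadef]; linarith
  set j : ℕ := ⌈xa/(ε/2)⌉₊ with hjdef
  refine ⟨j, ?_, ?_⟩
  · exact Nat.ceil_le_ceil ((div_le_div_iff_of_pos_right hh).mpr hxa2)
  set xj : ℝ := (j:ℝ)*(ε/2) with hxjdef
  have hd1a : xa ≤ xj := by
    have h1 := Nat.le_ceil (xa/(ε/2))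
    rw [hxjdef, hjdef]
    calc xa = xa/(ε/2) * (ε/2) := by field_simp
    _ ≤ (⌈xa/(ε/2)⌉₊:ℝ) * (ε/2) := by
        apply mul_le_mul_of_nonneg_right h1 hh.le
  have hd1b : xj ≤ xa + ε/2 := by
    have h1 : ((⌈xa/(ε/2)⌉₊:ℕ):ℝ) < xa/(ε/2) + 1 := Nat.ceil_lt_add_one (by positivity)
    have h3 : ((⌈xa/(ε/2)⌉₊:ℕ):ℝ) * (ε/2) ≤ (xa/(ε/2) + 1) * (ε/2) := by
      apply mul_le_mul_of_nonneg_right h1.le hh.le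
    have h2 : (xa/(ε/2) + 1) * (ε/2) = xa + ε/2 := by field_simp
    rw [hxjdef, hjdef]
    linarith
  have hxj2 : xj ≤ 1.2 := by linarith
  have hxj0 : 0 ≤ xj := le_trans hxa0 hd1a
  set g : ℝ := gsp m j with hgdef
  have hg : 0 < g := gsp_pos hm j
  have hgx : g = ε/4 + xj^2/32 := by
    rw [hgdef, hxjdef]; unfold gsp; rw [← hεdef]; ring
  -- reduce p modulo 2π
  set k : ℤ := ⌊p/(2*π)⌋ with hkdef
  set pm : ℝ := p - 2*π*(k:ℝ) with hpmdef
  have hfl1 := Int.floor_le (p/(2*π))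
  have hfl2 := Int.lt_floor_add_one (p/(2*π))
  rw [← hkdef] at hfl1 hfl2
  have hpm0 : 0 ≤ pm := by
    rw [hpmdef]
    have : (k:ℝ) * (2*π) ≤ p/(2*π) * (2*π) := by
      apply mul_le_mul_of_nonneg_right hfl1 (by positivity)
    have h2 : p/(2*π) * (2*π) = p := by field_simp
    nlinarith
  have hpm2 : pm ≤ 2*π := by
    rw [hpmdef]
    have : p/(2*π) * (2*π) < ((k:ℝ)+1) * (2*π) := by
      apply mul_lt_mul_of_pos_right hfl2 (by positivity)
    have h2 : p/(2*π) * (2*π) = p := by field_simp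
    nlinarith
  set i : ℕ := ⌈pm/g⌉₊ with hidef
  refine ⟨i, ?_, ?_⟩
  · exact Nat.ceil_le_ceil ((div_le_div_iff_of_pos_right hg).mpr hpm2)
  set u : ℝ := (i:ℝ)*g with hudef
  set s : ℝ := u - pm with hsdef
  have hs0 : 0 ≤ s := by
    have h1 := Nat.le_ceil (pm/g)
    rw [hsdef, hudef, hidef]
    have : pm/g * g ≤ (⌈pm/g⌉₊:ℝ) * g := mul_le_mul_of_nonneg_right h1 hg.le
    have h2 : pm/g * g = pm := by field_simp
    linarith
  have hs1 : s ≤ g := by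
    have h1 : ((⌈pm/g⌉₊:ℕ):ℝ) < pm/g + 1 := Nat.ceil_lt_add_one (by positivity)
    have h3 : ((⌈pm/g⌉₊:ℕ):ℝ) * g ≤ (pm/g + 1) * g := by
      apply mul_le_mul_of_nonneg_right h1.le hg.le
    have h2 : (pm/g + 1) * g = pm + g := by field_simp
    rw [hsdef, hudef, hidef]
    linarith
  set β : ℝ := π - xj with hβdef
  have hchord : (chord m j i).1 = u ∧ (chord m j i).2 = u + β := by
    constructor
    · rw [hudef, hgdef]; rfl
    · show (i:ℝ)*gsp m j + (π - (j:ℝ)*((m:ℝ)⁻¹/2)) = u + β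
      rw [hudef, hgdef, hβdef, hxjdef, hεdef]
  rw [hchord.1, hchord.2]
  -- term 1
  have hT1 : arcDist p u ≤ s := by
    have hp : p = pm + 2*π*(k:ℝ) := by rw [hpmdef]; ring
    calc arcDist p u = arcDist (pm + 2*π*(k:ℤ)) u := by rw [← hp]
    _ = arcDist pm u := arcDist_shift' pm u k
    _ ≤ |pm - u| := arcDist_le_abs pm u
    _ = s := by rw [abs_sub_comm, abs_of_nonneg (by linarith [hs0] : (0:ℝ) ≤ u - pm)]
  -- term 2
  have harc : arcDist u (u+β) = β := by
    have : |u - (u+β)| = β := by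
      rw [show u - (u+β) = -β by ring, abs_neg, abs_of_nonneg (by linarith)]
    rw [arcDist_eq_abs (by rw [this]; linarith), this]
  have hT2 : chordLen u (u+β) ≤ 2 - xj^2/8 := by
    unfold chordLen
    rw [harc, hβdef, show (π - xj)/2 = π/2 - xj/2 by ring, Real.sin_pi_div_two_sub]
    have hc := cos_le_quad (by linarith : 0 ≤ xj/2) (by linarith : xj/2 ≤ 1)
    have he : (xj/2)^2 = xj^2/4 := by ring
    linarith
  -- term 3
  have hT3 : arcDist (u+β) (p+a) ≤ s + (xj - xa) := by
    have hp : p + a = (pm + a) + 2*π*(k:ℝ) := by rw [hpmdef]; ring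
    calc arcDist (u+β) (p+a) = arcDist (u+β) ((pm+a) + 2*π*(k:ℤ)) := by rw [← hp]
    _ = arcDist (u+β) (pm+a) := arcDist_shift _ _ k
    _ ≤ |(u+β) - (pm+a)| := arcDist_le_abs _ _
    _ = |s - (xj - xa)| := by
        rw [hsdef, hβdef, hxadef]; ring_nf
    _ ≤ s + (xj - xa) := by
        rw [abs_le]; constructor <;> linarith
  have hd10 : 0 ≤ xj - xa := by linarith
  have hd11 : xj - xa ≤ ε/2 := by linarith
  linarith [hT1, hT2, hT3, hs1, hgx, sq_nonneg xj, hd11]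

lemma chord_mem_shortcuts {m : ℕ} {j i : ℕ} (hj : j ≤ bigJ m) (hi : i ≤ npts m j) :
    chord m j i ∈ shortcuts m := by
  rw [shortcuts, Finset.mem_image]
  refine ⟨⟨j, i⟩, ?_, rfl⟩
  exact Finset.mem_sigma.mpr ⟨Finset.mem_range.mpr (Nat.lt_succ_of_le hj),
    Finset.mem_range.mpr (Nat.lt_succ_of_le hi)⟩

lemma shortcuts_isShortcut {m : ℕ} (hm : 10 ≤ m) : ∀ s ∈ shortcuts m, IsShortcut s := by
  intro s hs
  rw [shortcuts, Finset.mem_image] at hs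
  obtain ⟨⟨j, i⟩, hji, rfl⟩ := hs
  simp only [Finset.mem_sigma, Finset.mem_range] at hji
  have hj : j ≤ bigJ m := by omega
  have hβ := beta_bound hm hj
  have hm' : (0:ℝ) < m := by exact_mod_cast Nat.lt_of_lt_of_le (by norm_num) hm
  have hε10 : (m:ℝ)⁻¹ ≤ 1/10 := by
    rw [inv_le_comm₀ (by positivity) (by norm_num)]
    norm_num
    exact_mod_cast hm
  have hπ4 : π < 3.15 := pi_lt_d2
  have hβ2 : (0:ℝ) ≤ (j:ℝ)*((m:ℝ)⁻¹/2) := by positivity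
  set β : ℝ := π - (j:ℝ)*((m:ℝ)⁻¹/2) with hβdef
  have hβpos : 0 < β := by rw [hβdef]; linarith
  have hβpi : β ≤ π := by rw [hβdef]; linarith
  unfold IsShortcut chord
  simp only
  have : |(i:ℝ)*gsp m j - ((i:ℝ)*gsp m j + β)| = β := by
    rw [show (i:ℝ)*gsp m j - ((i:ℝ)*gsp m j + β) = -β by ring, abs_neg,
      abs_of_nonneg hβpos.le]
  rw [arcDist_eq_abs (by rw [this]; exact hβpi), this]
  exact ne_of_gt hβpos

lemma dS_bound {m : ℕ} (hm : 10 ≤ m) (p q : ℝ) :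
    dS (shortcuts m) p q ≤ 2 + (m:ℝ)⁻¹ := by
  obtain ⟨k, hk, ha, hle⟩ := arcDist_rep p q
  set r : ℝ := p - q - 2 * π * round ((p-q)/(2*π)) with hrdef
  by_cases hsmall : arcDist p q ≤ 2 + (m:ℝ)⁻¹
  · calc dS (shortcuts m) p q ≤ walkCost q p [] := dS_le _ _ _ [] (by simp)
    _ = arcDist p q := rfl
    _ ≤ 2 + (m:ℝ)⁻¹ := hsmall
  · push_neg at hsmall
    rw [ha] at hsmall
    rcases le_or_gt r 0 with hr | hr
    · -- q + 2πk = p + |r|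
      rw [abs_of_nonpos hr] at hsmall hle
      obtain ⟨j, hj, i, hi, hcost⟩ := coverage hm p (-r) hsmall hle
      have hmem := chord_mem_shortcuts hj hi
      calc dS (shortcuts m) p q ≤ walkCost q p [chord m j i] := by
            apply dS_le
            intro e he
            simp at he
            subst he
            exact Or.inl hmem
      _ = arcDist p (chord m j i).1 + chordLen (chord m j i).1 (chord m j i).2 +
            arcDist (chord m j i).2 q := rfl
      _ = arcDist p (chord m j i).1 + chordLen (chord m j i).1 (chord m j i).2 +
            arcDist (chord m j i).2 (p + -r) := by
            rw [show p + -r = q + 2*π*(k:ℝ) from by rw [hk]; ring, arcDist_shift]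
      _ ≤ 2 + (m:ℝ)⁻¹ := hcost
    · -- q + 2πk = p - r ; use reversed chord from p - r
      rw [abs_of_pos hr] at hsmall hle
      obtain ⟨j, hj, i, hi, hcost⟩ := coverage hm (p - r) r hsmall hle
      have hmem := chord_mem_shortcuts hj hi
      calc dS (shortcuts m) p q
          ≤ walkCost q p [((chord m j i).2, (chord m j i).1)] := by
            apply dS_le
            intro e he
            simp at he
            subst he
            exact Or.inr hmem
      _ = arcDist p (chord m j i).2 + chordLen (chord m j i).2 (chord m j i).1 +
            arcDist (chord m j i).1 q := rfl
      _ = arcDist (p - r) (chord m j i).1 + chordLen (chord m j i).1 (chord m j i).2 +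
            arcDist (chord m j i).2 (p - r + r) := by
            have e2 := chordLen_comm (chord m j i).2 (chord m j i).1
            have e3 : arcDist (chord m j i).1 q = arcDist (p - r) (chord m j i).1 := by
              calc arcDist (chord m j i).1 q
                  = arcDist (chord m j i).1 (q + 2*π*(k:ℝ)) := (arcDist_shift _ _ k).symm
              _ = arcDist (chord m j i).1 (p - r) := by rw [hk]
              _ = arcDist (p - r) (chord m j i).1 := arcDist_comm _ _
            have e1 := arcDist_comm p (chord m j i).2
            rw [show p - r + r = p from by ring, e1, e2, e3]
            ring
      _ ≤ 2 + (m:ℝ)⁻¹ := hcost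

lemma card_bound {m : ℕ} (hm : 10 ≤ m) :
    ((shortcuts m).card : ℝ) ≤ 2000 * m * Real.sqrt m := by
  have hm' : (0:ℝ) < m := by exact_mod_cast Nat.lt_of_lt_of_le (by norm_num) hm
  have hπ4 : π < 3.15 := pi_lt_d2
  have hπ3 : 3 < π := pi_gt_three
  set ε : ℝ := (m:ℝ)⁻¹ with hεdef
  have hε0 : 0 < ε := by positivity
  set J : ℕ := bigJ m with hJdef
  set K : ℕ := Nat.sqrt m with hKdef
  -- card ≤ sum of counts
  have h1 : (shortcuts m).card ≤ ∑ j ∈ Finset.range (J+1), (npts m j + 1) := by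
    refine le_trans Finset.card_image_le (le_of_eq ?_)
    rw [Finset.card_sigma]
    simp [Finset.card_range]; rfl
  have h1' : ((shortcuts m).card : ℝ) ≤ ∑ j ∈ Finset.range (J+1), ((npts m j : ℝ) + 1) := by
    calc ((shortcuts m).card : ℝ) ≤ ((∑ j ∈ Finset.range (J+1), (npts m j + 1) : ℕ) : ℝ) := by
          exact_mod_cast h1
    _ = ∑ j ∈ Finset.range (J+1), ((npts m j : ℝ) + 1) := by push_cast; ring
  -- term bounds
  have hterm : ∀ j : ℕ, (npts m j : ℝ) + 1 ≤ 2*π/(gsp m j) + 2 := by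
    intro j
    have hg := gsp_pos hm j
    have := Nat.ceil_lt_add_one (show (0:ℝ) ≤ 2*π/(gsp m j) by positivity)
    unfold npts
    linarith
  have htermA : ∀ j : ℕ, (npts m j : ℝ) + 1 ≤ 8*π*m + 2 := by
    intro j
    refine le_trans (hterm j) ?_
    have hg := gsp_pos hm j
    have hge : ε/4 ≤ gsp m j := by
      unfold gsp; rw [← hεdef]
      have : (0:ℝ) ≤ (j:ℝ)^2*ε^2/128 := by positivity
      linarith
    have : 2*π/(gsp m j) ≤ 2*π/(ε/4) :=
      div_le_div_of_nonneg_left (by positivity) (by positivity) hge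
    have he : 2*π/(ε/4) = 8*π*m := by
      rw [hεdef]; field_simp; ring
    linarith
  have htermB : ∀ j : ℕ, 1 ≤ j → (npts m j : ℝ) + 1 ≤ 256*π*m^2/(j:ℝ)^2 + 2 := by
    intro j hj1
    refine le_trans (hterm j) ?_
    have hg := gsp_pos hm j
    have hj0 : (0:ℝ) < (j:ℝ) := by exact_mod_cast hj1
    have hge : (j:ℝ)^2*ε^2/128 ≤ gsp m j := by
      unfold gsp; rw [← hεdef]
      have : (0:ℝ) ≤ ε/4 := by positivity
      linarith
    have : 2*π/(gsp m j) ≤ 2*π/((j:ℝ)^2*ε^2/128) :=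
      div_le_div_of_nonneg_left (by positivity) (by positivity) hge
    have he : 2*π/((j:ℝ)^2*ε^2/128) = 256*π*m^2/(j:ℝ)^2 := by
      rw [hεdef]; field_simp; ring
    linarith
  -- split the sum
  have hsub : Finset.range (J+1) ⊆ Finset.range (K+1) ∪ Finset.Ioo K (J+1) := by
    intro j hj
    simp only [Finset.mem_range, Finset.mem_union, Finset.mem_Ioo] at *
    omega
  have hdisj : Disjoint (Finset.range (K+1)) (Finset.Ioo K (J+1)) := by
    rw [Finset.disjoint_left]
    intro j hj hj'
    simp only [Finset.mem_range, Finset.mem_Ioo] at *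
    omega
  have h2 : ∑ j ∈ Finset.range (J+1), ((npts m j : ℝ) + 1)
      ≤ ∑ j ∈ Finset.range (K+1) ∪ Finset.Ioo K (J+1), ((npts m j : ℝ) + 1) := by
    apply Finset.sum_le_sum_of_subset_of_nonneg hsub
    intro j _ _
    positivity
  rw [Finset.sum_union hdisj] at h2
  -- bound the two pieces
  have h3 : ∑ j ∈ Finset.range (K+1), ((npts m j : ℝ) + 1) ≤ (K+1) * (8*π*m + 2) := by
    calc ∑ j ∈ Finset.range (K+1), ((npts m j : ℝ) + 1)
        ≤ ∑ _j ∈ Finset.range (K+1), (8*π*m + 2) := Finset.sum_le_sum fun j _ => htermA j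
    _ = (K+1) * (8*π*m + 2) := by
        rw [Finset.sum_const, Finset.card_range]; push_cast; ring
  have h4 : ∑ j ∈ Finset.Ioo K (J+1), ((npts m j : ℝ) + 1)
      ≤ 256*π*m^2 * (2/((K:ℝ)+1)) + 2*(J+1) := by
    calc ∑ j ∈ Finset.Ioo K (J+1), ((npts m j : ℝ) + 1)
        ≤ ∑ j ∈ Finset.Ioo K (J+1), (256*π*m^2 * ((j:ℝ)^2)⁻¹ + 2) := by
          apply Finset.sum_le_sum
          intro j hj
          rw [Finset.mem_Ioo] at hj
          have := htermB j (by omega)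
          rw [div_eq_mul_inv] at this
          linarith
    _ = 256*π*m^2 * (∑ j ∈ Finset.Ioo K (J+1), ((j:ℝ)^2)⁻¹) + 2 * (Finset.Ioo K (J+1)).card := by
        rw [Finset.sum_add_distrib, ← Finset.mul_sum, Finset.sum_const]
        push_cast; ring
    _ ≤ 256*π*m^2 * (2/((K:ℝ)+1)) + 2*(J+1) := by
        have hsq := sum_Ioo_inv_sq_le (α := ℝ) K (J+1)
        have hcard : ((Finset.Ioo K (J+1)).card : ℝ) ≤ (J+1 : ℝ) := by
          rw [Nat.card_Ioo]
          push_cast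
          have : (J + 1 - (K+1) : ℕ) ≤ J + 1 := by omega
          calc ((J + 1 - (K+1) : ℕ) : ℝ) ≤ ((J+1 : ℕ) : ℝ) := by exact_mod_cast this
          _ = (J:ℝ) + 1 := by push_cast; ring
        have hm2 : (0:ℝ) ≤ 256*π*m^2 := by positivity
        push_cast at hsq ⊢
        nlinarith [mul_le_mul_of_nonneg_left hsq hm2]
  -- numeric facts about sqrt
  set σ : ℝ := Real.sqrt m with hσdef
  have hσ0 : 0 < σ := Real.sqrt_pos.mpr hm'
  have hσ1 : 1 ≤ σ := by
    have h1m : (1:ℝ) ≤ (m:ℝ) := by exact_mod_cast (show 1 ≤ m by omega)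
    rw [hσdef, show (1:ℝ) = Real.sqrt 1 from Real.sqrt_one.symm]
    exact Real.sqrt_le_sqrt h1m
  have hσm : σ * σ = m := Real.mul_self_sqrt hm'.le
  have hK1 : (K:ℝ) ≤ σ := by
    rw [hσdef]
    apply Real.le_sqrt_of_sq_le
    rw [hKdef]
    exact_mod_cast Nat.sqrt_le' m
  have hK2 : σ ≤ (K:ℝ) + 1 := by
    rw [hσdef]
    have : ((m:ℕ):ℝ) < ((K:ℝ)+1)^2 := by
      rw [hKdef]
      exact_mod_cast Nat.lt_succ_sqrt' m
    exact (Real.sqrt_lt' (by positivity)).mpr this |>.le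
  -- J bound
  have hJb : (J:ℝ) + 1 ≤ 2*(π-2)*m + 2 := by
    have hc : (0:ℝ) ≤ (π-2)/((m:ℝ)⁻¹/2) := by
      apply div_nonneg <;> [linarith; positivity]
    have he : (π-2)/((m:ℝ)⁻¹/2) = 2*(π-2)*m := by field_simp
    have h6 : ((bigJ m : ℕ) : ℝ) < 2*(π-2)*m + 1 := by
      unfold bigJ
      calc ((⌈(π-2)/((m:ℝ)⁻¹/2)⌉₊ : ℕ) : ℝ) < (π-2)/((m:ℝ)⁻¹/2) + 1 := Nat.ceil_lt_add_one hc
      _ = 2*(π-2)*m + 1 := by rw [he]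
    rw [hJdef]
    linarith
  -- assemble
  have h5 : 256*π*(m:ℝ)^2 * (2/((K:ℝ)+1)) ≤ 512*π*m*σ := by
    have h7 : 2/((K:ℝ)+1) ≤ 2/σ := div_le_div_of_nonneg_left (by norm_num) hσ0 hK2
    have he : 256*π*(m:ℝ)^2 * (2/σ) = 512*π*m*σ := by
      rw [show ((m:ℝ))^2 = (m:ℝ)*(σ*σ) from by rw [hσm]; ring]
      field_simp
      ring
    calc 256*π*(m:ℝ)^2 * (2/((K:ℝ)+1)) ≤ 256*π*(m:ℝ)^2 * (2/σ) := by
          apply mul_le_mul_of_nonneg_left h7 (by positivity)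
    _ = 512*π*m*σ := he
  have hfinal : ((shortcuts m).card : ℝ)
      ≤ ((K:ℝ)+1)*(8*π*m+2) + 512*π*m*σ + 2*(2*(π-2)*m + 2) := by
    have := h1'.trans h2
    nlinarith [h3, h4, h5, hJb]
  have hπmσ : π*((m:ℝ)*σ) ≤ 3.15*((m:ℝ)*σ) := by
    apply mul_le_mul_of_nonneg_right hπ4.le (by positivity)
  have hπm : π*(m:ℝ) ≤ 3.15*(m:ℝ) := by
    apply mul_le_mul_of_nonneg_right hπ4.le (by positivity)
  have hKp : ((K:ℝ)+1)*(8*π*m+2) ≤ 2*σ*(8*π*m+2) := by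
    apply mul_le_mul_of_nonneg_right (by linarith) ?_
    have : (0:ℝ) ≤ π*m := by positivity
    linarith
  have h1m : (1:ℝ) ≤ (m:ℝ) := by exact_mod_cast (show 1 ≤ m by omega)
  have hmσ : (m:ℝ) ≤ m*σ := by
    calc (m:ℝ) = m*1 := by ring
    _ ≤ m*σ := mul_le_mul_of_nonneg_left hσ1 hm'.le
  have hσσ : σ ≤ (m:ℝ)*σ := by
    calc σ = 1*σ := by ring
    _ ≤ m*σ := mul_le_mul_of_nonneg_right h1m hσ0.le
  have h1σ : (1:ℝ) ≤ (m:ℝ)*σ := h1m.trans hmσ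
  linarith [hfinal, hKp, hπmσ, hπm, hmσ, hσσ, h1σ]


/-- `O(m^{3/2})` shortcuts suffice for diameter `2 + 1/m`. -/
theorem stmt7 :
    ∃ C : ℝ, 0 < C ∧ ∃ m₀ : ℕ, ∀ m : ℕ, m₀ ≤ m →
      ∃ S : Finset (ℝ × ℝ), (∀ s ∈ S, IsShortcut s) ∧
        (S.card : ℝ) ≤ C * (m : ℝ) ^ ((3 : ℝ) / 2) ∧
        diamS S ≤ 2 + 1 / (m : ℝ) := by
  refine ⟨2000, by norm_num, 10, fun m hm => ⟨shortcuts m, shortcuts_isShortcut hm, ?_, ?_⟩⟩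
  · have hm' : (0:ℝ) < m := by exact_mod_cast Nat.lt_of_lt_of_le (by norm_num) hm
    have hrpow : (m:ℝ) ^ ((3:ℝ)/2) = (m:ℝ) * Real.sqrt m := by
      rw [Real.sqrt_eq_rpow, show (3:ℝ)/2 = 1 + 1/2 by norm_num,
        Real.rpow_add hm', Real.rpow_one]
    rw [hrpow, show (2000:ℝ) * ((m:ℝ) * Real.sqrt m) = 2000 * m * Real.sqrt m by ring]
    exact card_bound hm
  · rw [show (1:ℝ)/(m:ℝ) = (m:ℝ)⁻¹ from one_div _]
    apply Real.sSup_le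
    · rintro d ⟨p, q, rfl⟩
      exact dS_bound hm p q
    · have hm' : (0:ℝ) < m := by exact_mod_cast Nat.lt_of_lt_of_le (by norm_num) hm
      positivity
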